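/- For every 3×3 real matrix F with det F > 0 and every 3×3 real matrix L, the map t ↦ σ((I + tL)·F) is differentiable at t = 0, and its derivative σ̇ there satisfies the Truesdell-rate identity σ̇ = L·σ(F) + σ(F)·Lᵀ − tr(L)·σ(F) + D(F) : e, where e = (L + Lᵀ)/2 and (D(F) : e)_{ij} = Σ_{k,l} D(F)_{ijkl} e_{kl}. -/

import Mathlib

set_option maxHeartbeats 1000000

open Matrix

/-- Kronecker delta on `Fin 3`. -/
def kdelta (i j : Fin 3) : ℝ := if i = j then 1 else 0

/-- Neo-Hookean Cauchy stress `σ(F) = K(J−1)I + μ J^(−5/3) (b − tr(b)/3 · I)`,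
with `J = det F`, `b = F Fᵀ`. -/
noncomputable def nhSigma (K μ : ℝ) (F : Matrix (Fin 3) (Fin 3) ℝ) :
    Matrix (Fin 3) (Fin 3) ℝ :=
  (K * (F.det - 1)) • (1 : Matrix (Fin 3) (Fin 3) ℝ)
    + (μ * F.det ^ (-(5 : ℝ)/3)) •
        (F * Fᵀ - ((F * Fᵀ).trace / 3) • (1 : Matrix (Fin 3) (Fin 3) ℝ))

/-- Tangent stiffness tensor `D(F)` (Truesdell rate moduli of the neo-Hookean stress). -/
noncomputable def nhD (K μ : ℝ) (F : Matrix (Fin 3) (Fin 3) ℝ) (i j k l : Fin 3) : ℝ :=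
  K * (2 * F.det - 1) * kdelta i j * kdelta k l
    - K * (F.det - 1) * (kdelta i k * kdelta l j + kdelta i l * kdelta j k)
    + μ * F.det ^ (-(5 : ℝ)/3) *
        ((2/9) * (F * Fᵀ).trace * kdelta i j * kdelta k l
          - (2/3) * ((F * Fᵀ) i j * kdelta k l + kdelta i j * (F * Fᵀ) k l)
          + (1/3) * (F * Fᵀ).trace * (kdelta i k * kdelta l j + kdelta i l * kdelta j k))

attribute [local instance] Matrix.normedAddCommGroup Matrix.normedSpace

/-- The algebraic core: the Truesdell-rate combination on the right-hand side equals the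
explicit derivative of the neo-Hookean stress along `t ↦ (I + tL)F`. -/
theorem nh_final_eq (K μ : ℝ) (F L : Matrix (Fin 3) (Fin 3) ℝ) :
  (L * nhSigma K μ F + nhSigma K μ F * Lᵀ - L.trace • nhSigma K μ F +
      Matrix.of fun i j => ∑ k, ∑ l, nhD K μ F i j k l * (((1:ℝ)/2) • (L + Lᵀ)) k l) =
    (K * (L.trace * F.det)) • (1 : Matrix (Fin 3) (Fin 3) ℝ) +
      ((μ * F.det ^ (-(5:ℝ)/3)) •
          ((L * F * Fᵀ + F * (L * F)ᵀ) - ((L * F * Fᵀ + F * (L * F)ᵀ).trace / 3) • 1) +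
        (μ * (-(5:ℝ)/3 * L.trace * F.det ^ (-(5:ℝ)/3))) •
            (F * Fᵀ - ((F * Fᵀ).trace / 3) • 1)) := by
  ext i j
  fin_cases i <;> fin_cases j <;>
  · simp only [Fin.zero_eta, Fin.mk_one, Fin.reduceFinMk]
    simp only [nhSigma, nhD, kdelta, Matrix.add_apply, Matrix.sub_apply,
      Matrix.smul_apply, Matrix.mul_apply, Matrix.one_apply, Matrix.of_apply, Matrix.neg_apply,
      trace_fin_three, transpose_apply, Fin.sum_univ_three, smul_eq_mul, Fin.isValue,
      Fin.reduceEq, reduceIte, if_true, if_false]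
    ring

/-- the map `t ↦ σ((I + tL)·F)` is differentiable at `t = 0` and its
derivative there equals `L·σ + σ·Lᵀ − tr(L)·σ + D(F) : e` with `e = (L + Lᵀ)/2`. -/
theorem nhSigma_truesdell_rate (K μ : ℝ) (F L : Matrix (Fin 3) (Fin 3) ℝ)
    (hF : 0 < F.det) :
    HasDerivAt (fun t : ℝ => nhSigma K μ ((1 + t • L) * F))
      (L * nhSigma K μ F + nhSigma K μ F * Lᵀ - L.trace • nhSigma K μ F
        + Matrix.of fun i j =>
            ∑ k, ∑ l, nhD K μ F i j k l * (((1 : ℝ)/2) • (L + Lᵀ)) k l) 0 := by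
  set M : Matrix (Fin 3) (Fin 3) ℝ := L * F with hM
  set P : Polynomial ℝ := (1 + (Polynomial.X : Polynomial ℝ) • L.map Polynomial.C).det.divX.divX with hP
  set q : ℝ → ℝ := fun t => (1 + L.trace * t + P.eval t * t ^ 2) * F.det with hq
  set C1 : Matrix (Fin 3) (Fin 3) ℝ := M * Fᵀ + F * Mᵀ with hC1
  have hq0 : q 0 = F.det := by simp [hq]
  -- rewriting the determinant and the left Cauchy–Green tensor along the path
  have hdet : ∀ t : ℝ, ((1 + t • L) * F).det = q t := by
    intro t
    rw [det_mul, Matrix.det_one_add_smul t L]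
  have hgt : ∀ t : ℝ, (1 + t • L) * F = F + t • M := by
    intro t; rw [add_mul, one_mul, smul_mul_assoc]
  have hB : ∀ t : ℝ, ((1 + t • L) * F) * ((1 + t • L) * F)ᵀ
      = F * Fᵀ + t • C1 + (t ^ 2) • (M * Mᵀ) := by
    intro t
    rw [hgt, hC1]
    simp only [transpose_add, transpose_smul, add_mul, mul_add, smul_mul_assoc,
      mul_smul_comm, smul_smul, smul_add, sq]
    abel
  -- derivative of q
  have hdq : HasDerivAt q (L.trace * F.det) 0 := by
    have h1 : HasDerivAt (fun t : ℝ => 1 + L.trace * t) L.trace 0 := by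
      simpa using ((hasDerivAt_id (0:ℝ)).const_mul L.trace).const_add 1
    have h2 : HasDerivAt (fun t : ℝ => P.eval t * t ^ 2) 0 0 := by
      exact ((Polynomial.hasDerivAt P 0).mul (hasDerivAt_pow 2 0)).congr_deriv (by simp)
    simpa using (h1.add h2).mul_const F.det
  -- derivative of q ^ (-5/3)
  have hrq : HasDerivAt (fun t => q t ^ (-(5:ℝ)/3))
      ((-(5:ℝ)/3) * L.trace * F.det ^ (-(5:ℝ)/3)) 0 := by
    have h := hdq.rpow_const (p := -(5:ℝ)/3) (Or.inl (by rw [hq0]; exact ne_of_gt hF))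
    rw [hq0] at h
    convert h using 1
    rw [Real.rpow_sub hF, Real.rpow_one]
    field_simp
  -- derivative of the B-part
  have hBd : HasDerivAt (fun t : ℝ => F * Fᵀ + t • C1 + (t ^ 2) • (M * Mᵀ)) C1 0 := by
    have h1 : HasDerivAt (fun t : ℝ => F * Fᵀ + t • C1) C1 0 := by
      exact (((hasDerivAt_id (0:ℝ)).smul_const C1).const_add (F * Fᵀ)).congr_deriv (by simp)
    have h2 : HasDerivAt (fun t : ℝ => (t ^ 2) • (M * Mᵀ)) 0 0 := by
      exact ((hasDerivAt_pow 2 (0:ℝ)).smul_const (M * Mᵀ)).congr_deriv (by simp)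
    exact (h1.add h2).congr_deriv (by simp)
  -- derivative of the trace of the B-part
  have htrd : HasDerivAt (fun t : ℝ => (F * Fᵀ + t • C1 + (t ^ 2) • (M * Mᵀ)).trace) C1.trace 0 := by
    have hfe : (fun t : ℝ => (F * Fᵀ + t • C1 + (t ^ 2) • (M * Mᵀ)).trace)
        = fun t : ℝ => (F * Fᵀ).trace + t * C1.trace + t ^ 2 * (M * Mᵀ).trace := by
      funext t; simp [trace_add, trace_smul, smul_eq_mul]
    rw [hfe]
    have h1 : HasDerivAt (fun t : ℝ => (F * Fᵀ).trace + t * C1.trace) C1.trace 0 := by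
      simpa using ((hasDerivAt_id (0:ℝ)).mul_const C1.trace).const_add (F * Fᵀ).trace
    have h2 : HasDerivAt (fun t : ℝ => t ^ 2 * (M * Mᵀ).trace) 0 0 := by
      simpa using (hasDerivAt_pow 2 (0:ℝ)).mul_const (M * Mᵀ).trace
    exact (h1.add h2).congr_deriv (by simp)
  -- assemble the derivative
  have hs1 : HasDerivAt (fun t => (K * (q t - 1)) • (1 : Matrix (Fin 3) (Fin 3) ℝ))
      ((K * (L.trace * F.det)) • (1 : Matrix (Fin 3) (Fin 3) ℝ)) 0 :=
    (((hdq.sub_const 1).const_mul K).smul_const 1)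
  have hmat : HasDerivAt
      (fun t : ℝ => (F * Fᵀ + t • C1 + (t ^ 2) • (M * Mᵀ))
        - ((F * Fᵀ + t • C1 + (t ^ 2) • (M * Mᵀ)).trace / 3) • (1 : Matrix (Fin 3) (Fin 3) ℝ))
      (C1 - (C1.trace / 3) • 1) 0 :=
    hBd.sub ((htrd.div_const 3).smul_const 1)
  have hs2 : HasDerivAt (fun t => μ * q t ^ (-(5:ℝ)/3))
      (μ * ((-(5:ℝ)/3) * L.trace * F.det ^ (-(5:ℝ)/3))) 0 := hrq.const_mul μ
  have htot := hs1.add (hs2.smul hmat)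
  have hfun : (fun t : ℝ => nhSigma K μ ((1 + t • L) * F))
      = fun t : ℝ => (K * (q t - 1)) • (1 : Matrix (Fin 3) (Fin 3) ℝ)
          + (μ * q t ^ (-(5:ℝ)/3)) •
            ((F * Fᵀ + t • C1 + (t ^ 2) • (M * Mᵀ))
              - ((F * Fᵀ + t • C1 + (t ^ 2) • (M * Mᵀ)).trace / 3) • 1) := by
    funext t
    rw [nhSigma, hdet t, hB t]
  rw [hfun]
  refine htot.congr_deriv ?_
  rw [hq0]
  simp only [show ((0:ℝ) ^ (2:ℕ)) = 0 from by norm_num, zero_smul, add_zero]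
  rw [hC1, hM]
  exact (nh_final_eq K μ F L).symm
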